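/- Let θ, q ∈ ℚ_3 with 0 < |θ−1|_3 < |q|_3 ≤ 1/9. Then the cubic h(y) = y³ − (1+θ+θ²)y² − (2θ+1)(1−θ−q)y − (1−θ−q)² has a root y ∈ ℤ_3 with |y|_3 = 1/3 and |y − 3|_3 < 1/3. -/

import Mathlib

set_option maxHeartbeats 2000000
open Polynomial

private lemma coe_ofNat3 (n : ℕ) [n.AtLeastTwo] :
    ((OfNat.ofNat n : ℤ_[3]) : ℚ_[3]) = OfNat.ofNat n := by
  rw [show (OfNat.ofNat n : ℤ_[3]) = ((n:ℕ):ℤ_[3]) from (Nat.cast_ofNat).symm,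
    PadicInt.coe_natCast]
  exact Nat.cast_ofNat


private lemma nadd3 {x y : ℚ_[3]} {c : ℝ} (hx : ‖x‖ ≤ c) (hy : ‖y‖ ≤ c) :
    ‖x + y‖ ≤ c :=
  le_trans (Padic.nonarchimedean x y) (max_le hx hy)

private lemma norm_three : ‖(3:ℚ_[3])‖ = 1/3 := by
  have := @Padic.norm_p 3 ⟨by norm_num⟩
  norm_num at this ⊢
  exact_mod_cast this

private lemma tb3 {e q : ℚ_[3]} {c : ℝ} (he : ‖e‖ ≤ 1/27) (hq : ‖q‖ ≤ 1/9)
    (z : ℤ) (n i j : ℕ) (hd : ((3:ℤ)^n) ∣ z)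
    (hc : ((3:ℝ)^n)⁻¹ * (1/27)^i * (1/9)^j ≤ c) :
    ‖((z:ℚ_[3])) * e^i * q^j‖ ≤ c := by
  have hz : ‖((z:ℚ_[3]))‖ ≤ ((3:ℝ)^n)⁻¹ := by
    have := (Padic.norm_int_le_pow_iff_dvd (p:=3) z n).2 hd
    rw [zpow_neg] at this
    exact_mod_cast this
  calc ‖(z:ℚ_[3]) * e^i * q^j‖ = ‖(z:ℚ_[3])‖ * ‖e‖^i * ‖q‖^j := by
        rw [norm_mul, norm_mul, norm_pow, norm_pow]
    _ ≤ ((3:ℝ)^n)⁻¹ * (1/27)^i * (1/9)^j := by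
        gcongr <;> first | exact norm_nonneg _ | positivity
    _ ≤ c := hc

private lemma key_eval {e q : ℚ_[3]} (he : ‖e‖ ≤ 1/27) (hq : ‖q‖ ≤ 1/9) :
    ‖(3 - q - 2*e - 2*(q^2/9))^3
      - (1+(1+e)+(1+e)^2)*(3 - q - 2*e - 2*(q^2/9))^2
      - (2*(1+e)+1)*(1-(1+e)-q)*(3 - q - 2*e - 2*(q^2/9))
      - (1-(1+e)-q)^2‖ ≤ (1/3)^5 := by
  set H : ℚ_[3] := (3 - q - 2*e - 2*(q^2/9))^3
      - (1+(1+e)+(1+e)^2)*(3 - q - 2*e - 2*(q^2/9))^2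
      - (2*(1+e)+1)*(1-(1+e)-q)*(3 - q - 2*e - 2*(q^2/9))
      - (1-(1+e)-q)^2 with hH
  have h729 : (729:ℚ_[3]) * H =
      ((729:ℤ):ℚ_[3]) * e^0 * q^3 + ((-270:ℤ):ℚ_[3]) * e^0 * q^4
      + ((-108:ℤ):ℚ_[3]) * e^0 * q^5 + ((-8:ℤ):ℚ_[3]) * e^0 * q^6
      + ((-26244:ℤ):ℚ_[3]) * e^1 * q^0 + ((26973:ℤ):ℚ_[3]) * e^1 * q^1
      + ((-1701:ℤ):ℚ_[3]) * e^1 * q^2 + ((-3240:ℤ):ℚ_[3]) * e^1 * q^3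
      + ((-324:ℤ):ℚ_[3]) * e^1 * q^4 + ((36450:ℤ):ℚ_[3]) * e^2 * q^0
      + ((-17496:ℤ):ℚ_[3]) * e^2 * q^1 + ((-3969:ℤ):ℚ_[3]) * e^2 * q^2
      + ((-324:ℤ):ℚ_[3]) * e^2 * q^3 + ((-36:ℤ):ℚ_[3]) * e^2 * q^4
      + ((-8748:ℤ):ℚ_[3]) * e^3 * q^0 + ((-2916:ℤ):ℚ_[3]) * e^3 * q^1
      + ((-648:ℤ):ℚ_[3]) * e^3 * q^2 + ((-2916:ℤ):ℚ_[3]) * e^4 * q^0 := by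
    rw [hH]; push_cast; ring
  have hsum : ‖(729:ℚ_[3]) * H‖ ≤ (1/3)^11 := by
    rw [h729]
    repeat' apply nadd3
    · exact tb3 he hq 729 5 0 3 (by norm_num) (by norm_num)
    · exact tb3 he hq (-270) 3 0 4 (by norm_num) (by norm_num)
    · exact tb3 he hq (-108) 1 0 5 (by norm_num) (by norm_num)
    · exact tb3 he hq (-8) 0 0 6 (by norm_num) (by norm_num)
    · exact tb3 he hq (-26244) 8 1 0 (by norm_num) (by norm_num)
    · exact tb3 he hq 26973 6 1 1 (by norm_num) (by norm_num)
    · exact tb3 he hq (-1701) 4 1 2 (by norm_num) (by norm_num)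
    · exact tb3 he hq (-3240) 2 1 3 (by norm_num) (by norm_num)
    · exact tb3 he hq (-324) 0 1 4 (by norm_num) (by norm_num)
    · exact tb3 he hq 36450 5 2 0 (by norm_num) (by norm_num)
    · exact tb3 he hq (-17496) 3 2 1 (by norm_num) (by norm_num)
    · exact tb3 he hq (-3969) 1 2 2 (by norm_num) (by norm_num)
    · exact tb3 he hq (-324) 0 2 3 (by norm_num) (by norm_num)
    · exact tb3 he hq (-36) 0 2 4 (by norm_num) (by norm_num)
    · exact tb3 he hq (-8748) 2 3 0 (by norm_num) (by norm_num)
    · exact tb3 he hq (-2916) 0 3 1 (by norm_num) (by norm_num)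
    · exact tb3 he hq (-648) 0 3 2 (by norm_num) (by norm_num)
    · exact tb3 he hq (-2916) 0 4 0 (by norm_num) (by norm_num)
  have h729n : ‖(729:ℚ_[3])‖ = (1/3)^6 := by
    have : (729:ℚ_[3]) = 3^6 := by norm_num
    rw [this, norm_pow, norm_three]
  rw [norm_mul, h729n] at hsum
  nlinarith [norm_nonneg H]

private lemma key_deriv {e q : ℚ_[3]} (he : ‖e‖ ≤ 1/27) (hq : ‖q‖ ≤ 1/9) :
    ‖(3*(3 - q - 2*e - 2*(q^2/9))^2
      - 2*(1+(1+e)+(1+e)^2)*(3 - q - 2*e - 2*(q^2/9))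
      - (2*(1+e)+1)*(1-(1+e)-q)) - 9‖ ≤ 1/27 := by
  set D : ℚ_[3] := (3*(3 - q - 2*e - 2*(q^2/9))^2
      - 2*(1+(1+e)+(1+e)^2)*(3 - q - 2*e - 2*(q^2/9))
      - (2*(1+e)+1)*(1-(1+e)-q)) - 9 with hD
  have h27 : (27:ℚ_[3]) * D =
      ((-243:ℤ):ℚ_[3]) * e^0 * q^1 + ((9:ℤ):ℚ_[3]) * e^0 * q^2
      + ((36:ℤ):ℚ_[3]) * e^0 * q^3 + ((4:ℤ):ℚ_[3]) * e^0 * q^4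
      + ((-1053:ℤ):ℚ_[3]) * e^1 * q^0 + ((540:ℤ):ℚ_[3]) * e^1 * q^1
      + ((108:ℤ):ℚ_[3]) * e^1 * q^2 + ((540:ℤ):ℚ_[3]) * e^2 * q^0
      + ((54:ℤ):ℚ_[3]) * e^2 * q^1 + ((12:ℤ):ℚ_[3]) * e^2 * q^2
      + ((108:ℤ):ℚ_[3]) * e^3 * q^0 := by
    rw [hD]; push_cast; ring
  have hsum : ‖(27:ℚ_[3]) * D‖ ≤ (1/3)^6 := by
    rw [h27]
    repeat' apply nadd3
    · exact tb3 he hq (-243) 4 0 1 (by norm_num) (by norm_num)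
    · exact tb3 he hq 9 2 0 2 (by norm_num) (by norm_num)
    · exact tb3 he hq 36 0 0 3 (by norm_num) (by norm_num)
    · exact tb3 he hq 4 0 0 4 (by norm_num) (by norm_num)
    · exact tb3 he hq (-1053) 3 1 0 (by norm_num) (by norm_num)
    · exact tb3 he hq 540 1 1 1 (by norm_num) (by norm_num)
    · exact tb3 he hq 108 0 1 2 (by norm_num) (by norm_num)
    · exact tb3 he hq 540 0 2 0 (by norm_num) (by norm_num)
    · exact tb3 he hq 54 0 2 1 (by norm_num) (by norm_num)
    · exact tb3 he hq 12 0 2 2 (by norm_num) (by norm_num)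
    · exact tb3 he hq 108 0 3 0 (by norm_num) (by norm_num)
  have h27n : ‖(27:ℚ_[3])‖ = (1/3)^3 := by
    have : (27:ℚ_[3]) = 3^3 := by norm_num
    rw [this, norm_pow, norm_three]
  rw [norm_mul, h27n] at hsum
  nlinarith [norm_nonneg D]

/-- In `ℚ_3`, if `0 < ‖θ-1‖ < ‖q‖ ≤ 1/9`, the fixed-point cubic has a root `y`
with `‖y‖ = 1/3` and `‖y - 3‖ < 1/3` (in particular `y ∈ ℤ_3`). -/
theorem cubic_root_in_Q3 (θ q : ℚ_[3])
    (h1 : 0 < ‖θ - 1‖) (h2 : ‖θ - 1‖ < ‖q‖) (h3 : ‖q‖ ≤ 1 / 9) :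
    ∃ y : ℚ_[3],
      y ^ 3 - (1 + θ + θ ^ 2) * y ^ 2 - (2 * θ + 1) * (1 - θ - q) * y
        - (1 - θ - q) ^ 2 = 0 ∧ ‖y‖ = 1 / 3 ∧ ‖y - 3‖ < 1 / 3 := by
  have h9 : ‖(9:ℚ_[3])‖ = 1/9 := by
    have h : (9:ℚ_[3]) = 3^2 := by norm_num
    rw [h, norm_pow, norm_three]; norm_num
  have he : ‖θ - 1‖ ≤ 1/27 := by
    have hlt : ‖θ - 1‖ < ((3:ℕ):ℝ)^((-3:ℤ)+1) := by
      push_cast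
      calc ‖θ - 1‖ < ‖q‖ := h2
        _ ≤ 1/9 := h3
        _ ≤ (3:ℝ)^((-3:ℤ)+1) := by norm_num
    have := (Padic.norm_le_pow_iff_norm_lt_pow_add_one (θ-1) (-3)).2 hlt
    calc ‖θ - 1‖ ≤ ((3:ℕ):ℝ)^(-3:ℤ) := this
      _ = 1/27 := by push_cast; norm_num
  have h3' : ‖q‖ ≤ 1/9 := by linarith
  have htwo : ‖(2:ℚ_[3])‖ ≤ 1 := by
    exact_mod_cast Padic.norm_int_le_one (p:=3) 2
  have hWle : ‖q^2/9‖ ≤ 1/9 := by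
    rw [norm_div, norm_pow, h9]
    rw [div_le_iff₀ (by norm_num)]
    nlinarith [norm_nonneg q]
  -- integrality
  have hE1 : ‖θ - 1‖ ≤ 1 := by linarith
  have hQ1 : ‖q‖ ≤ 1 := by linarith
  have hW1 : ‖q^2/9‖ ≤ 1 := by linarith
  set E : ℤ_[3] := ⟨θ - 1, hE1⟩ with hEdef
  set Q : ℤ_[3] := ⟨q, hQ1⟩ with hQdef
  set W : ℤ_[3] := ⟨q^2/9, hW1⟩ with hWdef
  have cE : (E:ℚ_[3]) = θ - 1 := rfl
  have cQ : (Q:ℚ_[3]) = q := rfl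
  have cW : (W:ℚ_[3]) = q^2/9 := rfl
  set F : Polynomial ℤ_[3] :=
    X^3 - C (1+(1+E)+(1+E)^2) * X^2 - C ((2*(1+E)+1)*(1-(1+E)-Q)) * X
      - C ((1-(1+E)-Q)^2) with hFdef
  set a : ℤ_[3] := 3 - Q - 2*E - 2*W with hadef
  have ca : (a:ℚ_[3]) = 3 - q - 2*(θ-1) - 2*(q^2/9) := by
    rw [hadef]; push_cast [cE, cQ, cW]
    rw [show ((3:ℤ_[3]):ℚ_[3]) = 3 from coe_ofNat3 3,
      show ((2:ℤ_[3]):ℚ_[3]) = 2 from coe_ofNat3 2]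
  have hFeval : ((F.eval a : ℤ_[3]) : ℚ_[3]) =
      (3 - q - 2*(θ-1) - 2*(q^2/9))^3
      - (1+(1+(θ-1))+(1+(θ-1))^2)*(3 - q - 2*(θ-1) - 2*(q^2/9))^2
      - (2*(1+(θ-1))+1)*(1-(1+(θ-1))-q)*(3 - q - 2*(θ-1) - 2*(q^2/9))
      - (1-(1+(θ-1))-q)^2 := by
    rw [hFdef]
    simp only [Polynomial.eval_sub, Polynomial.eval_mul, Polynomial.eval_pow,
      Polynomial.eval_C, Polynomial.eval_X]
    push_cast [cE, cQ, ca]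
    try rw [show ((3:ℤ_[3]):ℚ_[3]) = 3 from coe_ofNat3 3]
    try rw [show ((2:ℤ_[3]):ℚ_[3]) = 2 from coe_ofNat3 2]
    try ring
  have hFdeval : ((F.derivative.eval a : ℤ_[3]) : ℚ_[3]) =
      3*(3 - q - 2*(θ-1) - 2*(q^2/9))^2
      - 2*(1+(1+(θ-1))+(1+(θ-1))^2)*(3 - q - 2*(θ-1) - 2*(q^2/9))
      - (2*(1+(θ-1))+1)*(1-(1+(θ-1))-q) := by
    rw [hFdef]
    simp only [Polynomial.derivative_sub, Polynomial.derivative_mul,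
      Polynomial.derivative_C, Polynomial.derivative_X_pow, Polynomial.derivative_X,
      Polynomial.eval_sub, Polynomial.eval_mul, Polynomial.eval_pow, Polynomial.eval_add,
      Polynomial.eval_C, Polynomial.eval_X, Polynomial.eval_natCast, Polynomial.eval_one,
      Polynomial.eval_mul_X, Polynomial.eval_zero, mul_zero, zero_mul, add_zero, zero_add,
      mul_one]
    push_cast [cE, cQ, ca]
    try rw [show ((3:ℤ_[3]):ℚ_[3]) = 3 from coe_ofNat3 3]
    try rw [show ((2:ℤ_[3]):ℚ_[3]) = 2 from coe_ofNat3 2]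
    try ring
  have hda : ‖F.derivative.eval a‖ = 1/9 := by
    rw [PadicInt.norm_def, hFdeval]
    have hkd := key_deriv he h3'
    have hsplit : 3*(3 - q - 2*(θ-1) - 2*(q^2/9))^2
        - 2*(1+(1+(θ-1))+(1+(θ-1))^2)*(3 - q - 2*(θ-1) - 2*(q^2/9))
        - (2*(1+(θ-1))+1)*(1-(1+(θ-1))-q)
        = 9 + ((3*(3 - q - 2*(θ-1) - 2*(q^2/9))^2
        - 2*(1+(1+(θ-1))+(1+(θ-1))^2)*(3 - q - 2*(θ-1) - 2*(q^2/9))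
        - (2*(1+(θ-1))+1)*(1-(1+(θ-1))-q)) - 9) := by ring
    rw [hsplit, Padic.add_eq_max_of_ne (by rw [h9]; intro hc; rw [← hc] at hkd; norm_num at hkd),
      h9, max_eq_left (le_trans hkd (by norm_num))]
  have hnorm : ‖F.eval a‖ < ‖F.derivative.eval a‖^2 := by
    rw [PadicInt.norm_def, hFeval, hda]
    exact lt_of_le_of_lt (key_eval he h3') (by norm_num)
  obtain ⟨z, hz0, hz1, -, -⟩ := hensels_lemma hnorm
  have hz1' : ‖(z:ℚ_[3]) - (a:ℚ_[3])‖ < 1/9 := by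
    rw [Polynomial.coe_aeval_eq_eval, hda] at hz1
    rw [← PadicInt.coe_sub, ← PadicInt.norm_def]
    exact hz1
  have ha3 : ‖(a:ℚ_[3]) - 3‖ ≤ 1/9 := by
    rw [ca]
    have hsp : (3 - q - 2*(θ-1) - 2*(q^2/9)) - 3
        = -q + (-(2*(θ-1)) + -(2*(q^2/9))) := by ring
    rw [hsp]
    refine nadd3 (by rw [norm_neg]; exact h3') (nadd3 ?_ ?_) <;> rw [norm_neg]
    · calc ‖2*(θ-1)‖ = ‖(2:ℚ_[3])‖*‖θ-1‖ := norm_mul _ _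
        _ ≤ 1 * (1/27) := mul_le_mul htwo he (norm_nonneg _) zero_le_one
        _ ≤ 1/9 := by norm_num
    · calc ‖2*(q^2/9)‖ = ‖(2:ℚ_[3])‖*‖q^2/9‖ := norm_mul _ _
        _ ≤ 1 * (1/9) := mul_le_mul htwo hWle (norm_nonneg _) zero_le_one
        _ ≤ 1/9 := by norm_num
  have hy3 : ‖(z:ℚ_[3]) - 3‖ ≤ 1/9 := by
    have hsp : (z:ℚ_[3]) - 3 = ((z:ℚ_[3]) - (a:ℚ_[3])) + ((a:ℚ_[3]) - 3) := by ring
    rw [hsp]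
    exact nadd3 (le_of_lt hz1') ha3
  refine ⟨(z:ℚ_[3]), ?_, ?_, ?_⟩
  · have h0 : ((F.eval z : ℤ_[3]) : ℚ_[3]) = 0 := by rw [← Polynomial.coe_aeval_eq_eval, hz0]; norm_cast
    rw [hFdef] at h0
    simp only [Polynomial.eval_sub, Polynomial.eval_mul, Polynomial.eval_pow,
      Polynomial.eval_C, Polynomial.eval_X] at h0
    push_cast [cE, cQ] at h0
    try rw [show ((3:ℤ_[3]):ℚ_[3]) = 3 from coe_ofNat3 3] at h0
    try rw [show ((2:ℤ_[3]):ℚ_[3]) = 2 from coe_ofNat3 2] at h0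
    linear_combination h0
  · have hsp : (z:ℚ_[3]) = 3 + ((z:ℚ_[3]) - 3) := by ring
    have hne : ‖(3:ℚ_[3])‖ ≠ ‖(z:ℚ_[3]) - 3‖ := by
      rw [norm_three]; intro hc; rw [← hc] at hy3; norm_num at hy3
    rw [hsp, Padic.add_eq_max_of_ne hne, norm_three,
      max_eq_left (le_trans hy3 (by norm_num))]
  · exact lt_of_le_of_lt hy3 (by norm_num)
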